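/- Let G be a finite group, V an abelian subgroup of G, and g ∈ G an element normalizing V whose order is coprime to |V|. Let H be the subgroup generated by V and g, and let [V,g] denote the subgroup generated by all commutators [v,g] with v ∈ V. Then [V,g] equals the set { z ∈ H : z = [z,_n g] for some n ≥ 1 } (the minimal left Engel sink of g with respect to H), and moreover [V,g] is a right Engel sink of g with respect to H that is contained in every right Engel sink of g with respect to H (so [V,g] is also the minimal right Engel sink of g with respect to H). -/

import Mathlib

/-- The commutator `[a,b] = a⁻¹ b⁻¹ a b`. -/
def cmtr {G : Type*} [Group G] (a b : G) : G := a⁻¹ * b⁻¹ * a * b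

/-- `engel a b n` is the left-normed Engel commutator `[a,_n b] = [[...[[a,b],b],...],b]`
with `b` repeated `n` times. -/
def engel {G : Type*} [Group G] (a b : G) : ℕ → G
  | 0 => a
  | n + 1 => cmtr (engel a b n) b

/-- A finite subset `R` of `G` is a right Engel sink for `g` if for every `x ∈ G` there is a
positive integer `n₀` such that `[g,_n x] ∈ R` for all `n ≥ n₀`. -/
def IsRightEngelSink {G : Type*} [Group G] (g : G) (R : Set G) : Prop :=
  R.Finite ∧ ∀ x : G, ∃ n₀ : ℕ, 0 < n₀ ∧ ∀ n ≥ n₀, engel g x n ∈ R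

/-- A finite subset `E` of `G` is a left Engel sink for `g` if for every `x ∈ G` there is a
positive integer `n₀` such that `[x,_n g] ∈ E` for all `n ≥ n₀`. -/
def IsLeftEngelSink {G : Type*} [Group G] (g : G) (E : Set G) : Prop :=
  E.Finite ∧ ∀ x : G, ∃ n₀ : ℕ, 0 < n₀ ∧ ∀ n ≥ n₀, engel x g n ∈ E

/-- An element is almost right Engel if it admits a finite right Engel sink. -/
def AlmostRightEngel {G : Type*} [Group G] (g : G) : Prop :=
  ∃ R : Set G, IsRightEngelSink g R

/-- A group is locally nilpotent if every finitely generated subgroup is nilpotent. -/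
def LocallyNilpotent (G : Type*) [Group G] : Prop :=
  ∀ H : Subgroup G, H.FG → Group.IsNilpotent H

section AuxEngel

variable {G : Type*} [Group G]

lemma cmtr_one_left (b : G) : cmtr 1 b = 1 := by simp [cmtr]

lemma conj_cmtr (v g : G) : g⁻¹ * cmtr v g * g = cmtr (g⁻¹ * v * g) g := by
  simp only [cmtr]; group

lemma conj_cmtr' (v g : G) : g * cmtr v g * g⁻¹ = cmtr (g * v * g⁻¹) g := by
  simp only [cmtr]; group

lemma engel_eq_iterate (a b : G) (n : ℕ) :
    engel a b n = (fun c : G => cmtr c b)^[n] a := by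
  induction n with
  | zero => rfl
  | succ n ih => rw [engel, ih, Function.iterate_succ_apply']

end AuxEngel

/-- Let `V` be an abelian subgroup of a finite group `G` and `g` an element normalizing `V`
of order coprime to `|V|`; let `H = ⟨V, g⟩` and `W = [V,g]`. Then `W` coincides with the
minimal left Engel sink of `g` with respect to `H`, and `W` is the minimal right Engel sink
of `g` with respect to `H`. -/
theorem commutator_eq_engel_sinks {G : Type*} [Group G] [Finite G]
    (V : Subgroup G) (hab : ∀ a ∈ V, ∀ b ∈ V, a * b = b * a)
    (g : G) (hnorm : ∀ v ∈ V, g⁻¹ * v * g ∈ V)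
    (hcop : Nat.Coprime (orderOf g) (Nat.card V))
    (H : Subgroup G) (hH : H = V ⊔ Subgroup.zpowers g)
    (W : Subgroup G) (hW : W = Subgroup.closure {z : G | ∃ v ∈ V, z = cmtr v g}) :
    ((W : Set G) = {z : G | z ∈ H ∧ ∃ n : ℕ, 1 ≤ n ∧ engel z g n = z}) ∧
    ((W : Set G) ⊆ (H : Set G) ∧ (W : Set G).Finite ∧
      ∀ x ∈ H, ∃ n₀ : ℕ, 0 < n₀ ∧ ∀ n ≥ n₀, engel g x n ∈ (W : Set G)) ∧
    (∀ R : Set G, R ⊆ (H : Set G) → R.Finite →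
      (∀ x ∈ H, ∃ n₀ : ℕ, 0 < n₀ ∧ ∀ n ≥ n₀, engel g x n ∈ R) →
      (W : Set G) ⊆ R) := by
  have hVH : V ≤ H := hH ▸ le_sup_left
  have hgH : g ∈ H := hH ▸ Subgroup.mem_sup_right (Subgroup.mem_zpowers g)
  -- conjugation by g⁻¹ also preserves V
  have hconj' : ∀ v ∈ V, g * v * g⁻¹ ∈ V := by
    have hsurj : Function.Surjective (fun x : V => (⟨g⁻¹ * x * g, hnorm x x.2⟩ : V)) := by
      apply Finite.surjective_of_injective
      intro a b hab'
      have h1 : g⁻¹ * (a : G) * g = g⁻¹ * (b : G) * g := congrArg Subtype.val hab'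
      exact Subtype.ext (mul_left_cancel (mul_right_cancel h1))
    intro v hv
    obtain ⟨u, hu⟩ := hsurj ⟨v, hv⟩
    have hu' : g⁻¹ * (u : G) * g = v := congrArg Subtype.val hu
    have e : g * v * g⁻¹ = (u : G) := by rw [← hu']; group
    rw [e]; exact u.2
  have hconjZ : ∀ k : ℤ, ∀ v ∈ V, g ^ k * v * (g ^ k)⁻¹ ∈ V := by
    intro k
    induction k using Int.induction_on with
    | zero => intro v hv; simpa using hv
    | succ k ih =>
        intro v hv
        have e : g ^ ((k : ℤ) + 1) * v * (g ^ ((k : ℤ) + 1))⁻¹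
            = g ^ (k : ℤ) * (g * v * g⁻¹) * (g ^ (k : ℤ))⁻¹ := by
          rw [zpow_add_one]; group
        rw [e]; exact ih _ (hconj' v hv)
    | pred k ih =>
        intro v hv
        have e : g ^ (-(k : ℤ) - 1) * v * (g ^ (-(k : ℤ) - 1))⁻¹
            = g ^ (-(k : ℤ)) * (g⁻¹ * v * g) * (g ^ (-(k : ℤ)))⁻¹ := by
          rw [zpow_sub_one]; group
        rw [e]; exact ih _ (hnorm v hv)
  -- the commutator map is a homomorphism on V
  have hcm : ∀ a ∈ V, ∀ b ∈ V, cmtr (a * b) g = cmtr a g * cmtr b g := by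
    intro a ha b hb
    have h1 : (a⁻¹ * (g⁻¹ * a * g)) * b⁻¹ = b⁻¹ * (a⁻¹ * (g⁻¹ * a * g)) :=
      hab _ (mul_mem (inv_mem ha) (hnorm a ha)) b⁻¹ (inv_mem hb)
    calc cmtr (a * b) g = b⁻¹ * (a⁻¹ * (g⁻¹ * a * g)) * (g⁻¹ * b * g) := by
          simp only [cmtr]; group
      _ = (a⁻¹ * (g⁻¹ * a * g)) * b⁻¹ * (g⁻¹ * b * g) := by rw [← h1]
      _ = cmtr a g * cmtr b g := by simp only [cmtr]; group
  have hcinv : ∀ a ∈ V, cmtr a⁻¹ g = (cmtr a g)⁻¹ := by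
    intro a ha
    have h := hcm a⁻¹ (inv_mem ha) a ha
    rw [inv_mul_cancel, cmtr_one_left] at h
    exact eq_inv_of_mul_eq_one_left h.symm
  -- membership in W
  have memW : ∀ z : G, z ∈ W ↔ ∃ v ∈ V, z = cmtr v g := by
    let W' : Subgroup G :=
      { carrier := {z : G | ∃ v ∈ V, z = cmtr v g}
        one_mem' := ⟨1, V.one_mem, (cmtr_one_left g).symm⟩
        mul_mem' := by
          rintro a b ⟨v, hv, rfl⟩ ⟨u, hu, rfl⟩
          exact ⟨v * u, mul_mem hv hu, (hcm v hv u hu).symm⟩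
        inv_mem' := by
          rintro a ⟨v, hv, rfl⟩
          exact ⟨v⁻¹, inv_mem hv, (hcinv v hv).symm⟩ }
    have hWW' : W = W' := by rw [hW]; exact Subgroup.closure_eq W'
    intro z
    rw [hWW']
    exact Iff.rfl
  have hWmem : ∀ v ∈ V, cmtr v g ∈ W := fun v hv => (memW _).2 ⟨v, hv, rfl⟩
  have hWV : ∀ w ∈ W, w ∈ V := by
    intro w hw
    obtain ⟨v, hv, rfl⟩ := (memW w).1 hw
    have e : cmtr v g = v⁻¹ * (g⁻¹ * v * g) := by simp [cmtr, mul_assoc]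
    rw [e]; exact mul_mem (inv_mem hv) (hnorm v hv)
  have hWg : ∀ w ∈ W, g⁻¹ * w * g ∈ W := by
    intro w hw
    obtain ⟨v, hv, rfl⟩ := (memW w).1 hw
    rw [conj_cmtr]; exact hWmem _ (hnorm v hv)
  have hWg' : ∀ w ∈ W, g * w * g⁻¹ ∈ W := by
    intro w hw
    obtain ⟨v, hv, rfl⟩ := (memW w).1 hw
    rw [conj_cmtr']; exact hWmem _ (hconj' v hv)
  have hWconjZ : ∀ k : ℤ, ∀ w ∈ W, (g ^ k)⁻¹ * w * g ^ k ∈ W := by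
    intro k
    induction k using Int.induction_on with
    | zero => intro w hw; simpa using hw
    | succ k ih =>
        intro w hw
        have e : (g ^ ((k : ℤ) + 1))⁻¹ * w * g ^ ((k : ℤ) + 1)
            = g⁻¹ * ((g ^ (k : ℤ))⁻¹ * w * g ^ (k : ℤ)) * g := by
          rw [zpow_add_one]; group
        rw [e]; exact hWg _ (ih w hw)
    | pred k ih =>
        intro w hw
        have e : (g ^ (-(k : ℤ) - 1))⁻¹ * w * g ^ (-(k : ℤ) - 1)
            = g * ((g ^ (-(k : ℤ)))⁻¹ * w * g ^ (-(k : ℤ))) * g⁻¹ := by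
          rw [zpow_sub_one]; group
        rw [e]; exact hWg' _ (ih w hw)
  -- the kernel of the commutator map on W is trivial (uses coprimality)
  have hker : ∀ w ∈ W, cmtr w g = 1 → w = 1 := by
    intro w hw h1
    obtain ⟨v, hv, hwv⟩ := (memW w).1 hw
    have hwv' : w = v⁻¹ * g⁻¹ * v * g := hwv
    have hwV : w ∈ V := hWV w hw
    have h2 : g⁻¹ * w * g = w := by
      rw [show cmtr w g = w⁻¹ * (g⁻¹ * w * g) by simp [cmtr, mul_assoc]] at h1
      exact (inv_mul_eq_one.mp h1).symm
    have hgw : ∀ n : ℕ, (g ^ n)⁻¹ * w * g ^ n = w := by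
      intro n
      induction n with
      | zero => simp
      | succ n ih =>
          have e : (g ^ (n + 1))⁻¹ * w * g ^ (n + 1)
              = g⁻¹ * ((g ^ n)⁻¹ * w * g ^ n) * g := by group
          rw [e, ih, h2]
    have htel : ∀ n : ℕ, w ^ n = v⁻¹ * (g ^ n)⁻¹ * v * g ^ n := by
      intro n
      induction n with
      | zero => simp
      | succ n ih =>
          calc w ^ (n + 1) = w ^ n * w := pow_succ w n
            _ = (v⁻¹ * (g ^ n)⁻¹ * v * g ^ n) * ((g ^ n)⁻¹ * w * g ^ n) := by
                rw [ih, hgw n]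
            _ = (v⁻¹ * (g ^ n)⁻¹ * v * g ^ n)
                * ((g ^ n)⁻¹ * (v⁻¹ * g⁻¹ * v * g) * g ^ n) := by rw [← hwv']
            _ = v⁻¹ * (g ^ (n + 1))⁻¹ * v * g ^ (n + 1) := by group
    have hm : w ^ orderOf g = 1 := by
      rw [htel (orderOf g), pow_orderOf_eq_one]; group
    have h3 : orderOf w ∣ orderOf g := orderOf_dvd_of_pow_eq_one hm
    have h4 : orderOf w ∣ Nat.card V := by
      have h5 := orderOf_injective V.subtype V.subtype_injective ⟨w, hwV⟩
      rw [show V.subtype ⟨w, hwV⟩ = w from rfl] at h5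
      rw [h5]
      exact orderOf_dvd_natCard _
    have h6 : orderOf w = 1 := Nat.eq_one_of_dvd_one (hcop ▸ Nat.dvd_gcd h3 h4)
    exact orderOf_eq_one_iff.mp h6
  -- the commutator map is injective on W
  have hinj : ∀ a ∈ W, ∀ b ∈ W, cmtr a g = cmtr b g → a = b := by
    intro a ha b hb h
    have h1 : cmtr (a * b⁻¹) g = 1 := by
      rw [hcm a (hWV a ha) b⁻¹ (inv_mem (hWV b hb)), hcinv b (hWV b hb), h,
        mul_inv_cancel]
    exact mul_inv_eq_one.mp (hker _ (mul_mem ha (inv_mem hb)) h1)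
  have hφW : ∀ w ∈ W, cmtr w g ∈ W := fun w hw => hWmem w (hWV w hw)
  have hiterW : ∀ n : ℕ, ∀ w ∈ W, (fun c : G => cmtr c g)^[n] w ∈ W := by
    intro n
    induction n with
    | zero => intro w hw; simpa using hw
    | succ n ih =>
        intro w hw
        rw [Function.iterate_succ_apply']
        exact hφW _ (ih w hw)
  have hiterinj : ∀ n : ℕ, ∀ a ∈ W, ∀ b ∈ W,
      (fun c : G => cmtr c g)^[n] a = (fun c : G => cmtr c g)^[n] b → a = b := by
    intro n
    induction n with
    | zero => intro a _ b _ h; simpa using h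
    | succ n ih =>
        intro a ha b hb h
        rw [Function.iterate_succ_apply', Function.iterate_succ_apply'] at h
        exact ih a ha b hb (hinj _ (hiterW n a ha) _ (hiterW n b hb) h)
  -- every element of W is periodic under the commutator map
  have hper : ∀ w ∈ W, ∃ d : ℕ, 1 ≤ d ∧ (fun c : G => cmtr c g)^[d] w = w := by
    intro w hw
    obtain ⟨i, j, hij, hfij⟩ := Finite.exists_ne_map_eq_of_infinite
      (fun n : ℕ => (fun c : G => cmtr c g)^[n] w)
    rcases lt_or_gt_of_ne hij with h | h
    · refine ⟨j - i, by omega, ?_⟩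
      apply hiterinj i _ (hiterW _ w hw) w hw
      rw [← Function.iterate_add_apply, Nat.add_sub_cancel' h.le]
      exact hfij.symm
    · refine ⟨i - j, by omega, ?_⟩
      apply hiterinj j _ (hiterW _ w hw) w hw
      rw [← Function.iterate_add_apply, Nat.add_sub_cancel' h.le]
      exact hfij
  -- decomposition of elements of H
  have hdecomp : ∀ z ∈ H, ∃ v ∈ V, ∃ k : ℤ, z = v * g ^ k := by
    let K : Subgroup G :=
      { carrier := {z : G | ∃ v ∈ V, ∃ k : ℤ, z = v * g ^ k}
        one_mem' := ⟨1, V.one_mem, 0, by simp⟩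
        mul_mem' := by
          rintro a b ⟨v, hv, k, rfl⟩ ⟨u, hu, l, rfl⟩
          exact ⟨v * (g ^ k * u * (g ^ k)⁻¹), mul_mem hv (hconjZ k u hu), k + l, by group⟩
        inv_mem' := by
          rintro a ⟨v, hv, k, rfl⟩
          exact ⟨g ^ (-k) * v⁻¹ * (g ^ (-k))⁻¹, hconjZ (-k) v⁻¹ (inv_mem hv), -k, by group⟩ }
    have hle : H ≤ K := by
      rw [hH]
      refine sup_le (fun v hv => ⟨v, hv, 0, by simp⟩) ?_
      rintro x hx
      obtain ⟨k, rfl⟩ := Subgroup.mem_zpowers_iff.mp hx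
      exact ⟨1, V.one_mem, k, by simp⟩
    exact fun z hz => hle hz
  have hHcmtr : ∀ z ∈ H, cmtr z g ∈ W := by
    intro z hz
    obtain ⟨v, hv, k, rfl⟩ := hdecomp z hz
    have e : cmtr (v * g ^ k) g = (g ^ k)⁻¹ * cmtr v g * g ^ k := by
      simp only [cmtr]; group
    rw [e]; exact hWconjZ k _ (hWmem v hv)
  have hcg : ∀ x ∈ H, cmtr g x ∈ W := by
    intro x hx
    obtain ⟨u, hu, k, rfl⟩ := hdecomp x hx
    have e : cmtr g (u * g ^ k) = (g ^ k)⁻¹ * (cmtr u g)⁻¹ * g ^ k := by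
      simp only [cmtr]; group
    rw [e]; exact hWconjZ k _ (inv_mem (hWmem u hu))
  have hcwx : ∀ x ∈ H, ∀ w ∈ W, cmtr w x ∈ W := by
    intro x hx w hw
    obtain ⟨u, hu, k, rfl⟩ := hdecomp x hx
    have huw : u⁻¹ * w * u = w := by
      rw [mul_assoc, hab w (hWV w hw) u hu, ← mul_assoc, inv_mul_cancel, one_mul]
    have e : cmtr w (u * g ^ k) = w⁻¹ * ((g ^ k)⁻¹ * (u⁻¹ * w * u) * g ^ k) := by
      simp only [cmtr]; group
    rw [e, huw]
    exact mul_mem (inv_mem hw) (hWconjZ k w hw)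
  have hsink : ∀ x ∈ H, ∀ m : ℕ, engel g x (m + 1) ∈ W := by
    intro x hx m
    induction m with
    | zero => exact hcg x hx
    | succ m ih => exact hcwx x hx _ ih
  -- minimality of W as a right Engel sink
  have hmin : ∀ R : Set G, R ⊆ (H : Set G) → R.Finite →
      (∀ x ∈ H, ∃ n₀ : ℕ, 0 < n₀ ∧ ∀ n ≥ n₀, engel g x n ∈ R) → (W : Set G) ⊆ R := by
    intro R _ _ hR w hw
    obtain ⟨u, hu, huy⟩ := (memW (g * w⁻¹ * g⁻¹)).1 (hWg' w⁻¹ (inv_mem hw))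
    have hx : u * g ∈ H := mul_mem (hVH hu) hgH
    obtain ⟨n₀, hn₀, hRn⟩ := hR (u * g) hx
    obtain ⟨d, hd1, hdw⟩ := hper w hw
    have h1 : engel g (u * g) 1 = w := by
      show cmtr g (u * g) = w
      have e : cmtr g (u * g) = g⁻¹ * (cmtr u g)⁻¹ * g := by simp only [cmtr]; group
      rw [e, ← huy]; group
    have hstep : ∀ m : ℕ, engel g (u * g) (m + 1) = (fun c : G => cmtr c g)^[m] w := by
      intro m
      induction m with
      | zero => simpa using h1
      | succ m ih =>
          have hmW : (fun c : G => cmtr c g)^[m] w ∈ W := hiterW m w hw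
          have e2 : engel g (u * g) (m + 1 + 1) = cmtr (engel g (u * g) (m + 1)) (u * g) := rfl
          rw [e2, ih, Function.iterate_succ_apply']
          set y := (fun c : G => cmtr c g)^[m] w with hy
          have hyu : u⁻¹ * y * u = y := by
            rw [mul_assoc, hab y (hWV y hmW) u hu, ← mul_assoc, inv_mul_cancel, one_mul]
          have e3 : cmtr y (u * g) = y⁻¹ * (g⁻¹ * (u⁻¹ * y * u) * g) := by
            simp only [cmtr]; group
          have e4 : cmtr y g = y⁻¹ * (g⁻¹ * y * g) := by simp only [cmtr]; group
          rw [e3, hyu, e4]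
    have hcyc : ∀ t : ℕ, (fun c : G => cmtr c g)^[t * d] w = w := by
      intro t
      induction t with
      | zero => simp
      | succ t ih =>
          have e : (t + 1) * d = d + t * d := by ring
          rw [e, Function.iterate_add_apply, ih, hdw]
    have hn : n₀ * d + 1 ≥ n₀ := by
      have : n₀ * 1 ≤ n₀ * d := Nat.mul_le_mul_left n₀ hd1
      omega
    have hmem := hRn (n₀ * d + 1) hn
    rw [hstep (n₀ * d), hcyc n₀] at hmem
    exact hmem
  -- part 1
  have part1 : (W : Set G) = {z : G | z ∈ H ∧ ∃ n : ℕ, 1 ≤ n ∧ engel z g n = z} := by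
    ext z
    constructor
    · intro hz
      have hzW : z ∈ W := hz
      refine ⟨hVH (hWV z hzW), ?_⟩
      obtain ⟨d, hd1, hdz⟩ := hper z hzW
      exact ⟨d, hd1, by rw [engel_eq_iterate]; exact hdz⟩
    · rintro ⟨hzH, n, hn1, hzn⟩
      obtain ⟨m, rfl⟩ : ∃ m, n = m + 1 := ⟨n - 1, by omega⟩
      have hmem : engel z g (m + 1) ∈ W := by
        rw [engel_eq_iterate, Function.iterate_succ_apply]
        exact hiterW m _ (hHcmtr z hzH)
      rw [hzn] at hmem
      exact hmem
  refine ⟨part1, ⟨fun w hw => hVH (hWV w hw), Set.toFinite _, ?_⟩, hmin⟩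
  intro x hx
  refine ⟨1, one_pos, fun n hn => ?_⟩
  obtain ⟨m, rfl⟩ : ∃ m, n = m + 1 := ⟨n - 1, by omega⟩
  exact hsink x hx m
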